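/- Let ζ ≠ 0, let L be a nonzero polynomial over ℂ, and set Λ = L². Suppose q₊ = ∏_{m=1}^N (z − w_m) has pairwise distinct roots with L(w_ℓ) ≠ 0 for all ℓ, and q₋ is a polynomial with q₋′q₊ − q₋q₊′ + 2ζ q₋q₊ = L². Then the roots satisfy the osp(1|2) Gaudin Bethe equations: for every ℓ, ζ + L′(w_ℓ)/L(w_ℓ) = ∑_{m≠ℓ} 1/(w_ℓ − w_m). -/

import Mathlib

open Polynomial Finset

theorem deriv_prod_linear {ι : Type*} [DecidableEq ι] (s : Finset ι) (f : ι → ℂ) :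
    derivative (∏ i ∈ s, (X - C (f i))) = ∑ i ∈ s, ∏ j ∈ s.erase i, (X - C (f j)) := by
  induction s using Finset.induction_on with
  | empty => simp
  | @insert a s ha ih =>
    rw [Finset.prod_insert ha, derivative_mul, ih, Finset.sum_insert ha,
      Finset.erase_insert ha]
    simp only [derivative_sub, derivative_X, derivative_C, sub_zero, one_mul]
    rw [Finset.mul_sum]
    congr 1
    refine Finset.sum_congr rfl fun i hi => ?_
    rw [Finset.erase_insert_of_ne (by rintro rfl; exact ha hi),
      Finset.prod_insert (fun h => ha (Finset.mem_of_mem_erase h))]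

/-- Nondegenerate solutions of the sl(2) qq-system with `Λ = L²` satisfy the
osp(1|2) Gaudin Bethe equations. -/
theorem osp12_bethe (ζ : ℂ) (hζ : ζ ≠ 0) (L : Polynomial ℂ) (hL : L ≠ 0)
    (N : ℕ) (w : Fin N → ℂ) (hw : Function.Injective w) (qp : Polynomial ℂ)
    (hq : qp = ∏ m : Fin N, (X - C (w m)))
    (hLw : ∀ ℓ : Fin N, L.eval (w ℓ) ≠ 0) (qm : Polynomial ℂ)
    (hqq : derivative qm * qp - qm * derivative qp + C (2 * ζ) * (qm * qp)
        = L ^ 2) :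
    ∀ ℓ : Fin N,
      ζ + (derivative L).eval (w ℓ) / L.eval (w ℓ)
        = ∑ m ∈ Finset.univ.erase ℓ, 1 / (w ℓ - w m) := by
  intro ℓ
  set a := w ℓ with ha
  set r : Polynomial ℂ := ∏ m ∈ Finset.univ.erase ℓ, (X - C (w m)) with hr
  have hqp : qp = (X - C a) * r := by
    rw [hq, hr, ← Finset.mul_prod_erase _ _ (Finset.mem_univ ℓ)]
  have hra : r.eval a ≠ 0 := by
    rw [hr]
    simp only [eval_prod, eval_sub, eval_X, eval_C]
    refine Finset.prod_ne_zero_iff.2 fun m hm => sub_ne_zero.2 ?_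
    exact fun h => (Finset.mem_erase.1 hm).1 (hw h).symm
  have hLa := hLw ℓ
  have hqpa : qp.eval a = 0 := by simp [hqp]
  have hdq : derivative qp = r + (X - C a) * derivative r := by
    rw [hqp, derivative_mul]
    simp
  have hd1 : (derivative qp).eval a = r.eval a := by simp [hdq]
  have hd2 : (derivative (derivative qp)).eval a = 2 * (derivative r).eval a := by
    rw [hdq]
    simp [derivative_mul]
    ring
  -- evaluate hqq at a
  have h1 : qm.eval a * r.eval a = -(L.eval a) ^ 2 := by
    have := congrArg (eval a) hqq
    simp only [eval_add, eval_sub, eval_mul, eval_pow, eval_C, hqpa, hd1,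
      mul_zero, zero_sub] at this
    linear_combination -this
  -- evaluate derivative of hqq at a
  have h2 : -(qm.eval a * (2 * (derivative r).eval a))
      + 2 * ζ * (qm.eval a * r.eval a)
      = 2 * L.eval a * (derivative L).eval a := by
    have := congrArg (fun p => (derivative p).eval a) hqq
    simp only [derivative_add, derivative_sub, derivative_mul, derivative_pow,
      derivative_C, eval_add, eval_sub, eval_mul, eval_C, eval_pow, hqpa, hd1, hd2,
      mul_zero, zero_mul, zero_add, add_zero] at this
    push_cast at this
    linear_combination this
  -- logarithmic derivative of r
  have hsum : (derivative r).eval a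
      = r.eval a * ∑ m ∈ Finset.univ.erase ℓ, 1 / (a - w m) := by
    rw [hr, deriv_prod_linear]
    simp only [eval_finset_sum, eval_prod, eval_sub, eval_X, eval_C, Finset.mul_sum]
    refine Finset.sum_congr rfl fun m hm => ?_
    have hne : a - w m ≠ 0 := sub_ne_zero.2 fun h => (Finset.mem_erase.1 hm).1 (hw h).symm
    have hp : (∏ x ∈ Finset.univ.erase ℓ, (a - w x))
        = (a - w m) * ∏ x ∈ (Finset.univ.erase ℓ).erase m, (a - w x) :=
      (Finset.mul_prod_erase _ _ hm).symm
    rw [hp, mul_one_div, mul_div_cancel_left₀ _ hne]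
  -- final algebra
  rw [hsum] at h2
  have key : eval a L ^ 2 * (∑ m ∈ Finset.univ.erase ℓ, 1 / (a - w m)) - ζ * eval a L ^ 2
      = eval a L * eval a (derivative L) := by
    linear_combination h2 / 2 + ((∑ m ∈ Finset.univ.erase ℓ, 1 / (a - w m)) - ζ) * h1
  have hLL : eval a L * eval a (derivative L)
      = eval a L * (((∑ m ∈ Finset.univ.erase ℓ, 1 / (a - w m)) - ζ) * eval a L) := by
    linear_combination -key
  have hd := mul_left_cancel₀ hLa hLL
  rw [hd]
  rw [mul_div_assoc, div_self (show eval a L ≠ 0 from hLa), mul_one]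
  ring
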